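/- Let G_u = ∂G/∂u for G(D^2u, Du, u) = F([a_{ij}]) as above. Then G_u = (1/u - u/w^2) F^{ij} a_{ij} + 2 F^{ij} a_{ik} ∇_j u ∇_k u/(u w^2) + (u/w) F^{ij}(δ_{ij} - ∇_i u ∇_j u / w^2). -/

import Mathlib

open scoped BigOperators

set_option maxHeartbeats 1600000 in
/-- Formula (2.19): the derivative of `G = F([a_{ij}])` in the variable `u` is
`G_u = (1/u - u/w²) F^{ij} a_{ij} + 2 F^{ij} a_{ik} ∇_j u ∇_k u/(uw²)
      + (u/w) F^{ij}(δ_{ij} - ∇_i u ∇_j u/w²)`. -/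
theorem stmt_14 (n : ℕ) (F : (Fin n → Fin n → ℝ) → ℝ)
    (u : ℝ) (hu : 0 < u) (p : Fin n → ℝ)
    (S : Fin n → Fin n → ℝ) (hS : ∀ i j, S i j = S j i)
    (w : ℝ → ℝ) (hw : w = fun t => Real.sqrt (t ^ 2 + ∑ i, p i ^ 2))
    (γ : ℝ → Fin n → Fin n → ℝ)
    (hγ : γ = fun t i j =>
      (if i = j then (1 : ℝ) else 0) - p i * p j / (w t * (t + w t)))
    (amat : ℝ → Fin n → Fin n → ℝ)
    (ham : amat = fun t i j => (t / w t) * ∑ k, ∑ l,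
      γ t i k * (t * (if k = l then (1 : ℝ) else 0) + S k l) * γ t l j)
    (LF : (Fin n → Fin n → ℝ) →L[ℝ] ℝ) (hLF : HasFDerivAt F LF (amat u))
    (Fm : Fin n → Fin n → ℝ)
    (hFm : Fm = fun k l => LF (Pi.single k (Pi.single l 1)))
    (hcomm : Matrix.of Fm * Matrix.of (amat u) = Matrix.of (amat u) * Matrix.of Fm) :
    HasDerivAt (fun t : ℝ => F (amat t))
      ((1 / u - u / (w u) ^ 2) * (∑ i, ∑ j, Fm i j * amat u i j)
        + 2 * (∑ i, ∑ j, ∑ k, Fm i j * amat u i k * p j * p k) / (u * (w u) ^ 2)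
        + (u / w u) * ∑ i, ∑ j, Fm i j *
            ((if i = j then (1 : ℝ) else 0) - p i * p j / (w u) ^ 2)) u := by
  have hpsq : (0:ℝ) ≤ ∑ i, p i ^ 2 := Finset.sum_nonneg fun i _ => sq_nonneg _
  have harg : (0:ℝ) < u ^ 2 + ∑ i, p i ^ 2 := by positivity
  have hWeq : w u = Real.sqrt (u ^ 2 + ∑ i, p i ^ 2) := by rw [hw]
  have hWpos : 0 < w u := by rw [hWeq]; exact Real.sqrt_pos.2 harg
  have hWne : w u ≠ 0 := ne_of_gt hWpos
  have hune : u ≠ 0 := ne_of_gt hu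
  have hW2 : (w u) ^ 2 = u ^ 2 + ∑ i, p i ^ 2 := by
    rw [hWeq]; exact Real.sq_sqrt harg.le
  have hp2 : (∑ i, p i ^ 2) = (w u) ^ 2 - u ^ 2 := by linarith
  have huW : 0 < u + w u := by linarith
  have huWne : u + w u ≠ 0 := ne_of_gt huW
  -- derivative of w
  have hdw : HasDerivAt w (u / w u) u := by
    have h1 : HasDerivAt (fun t : ℝ => t ^ 2 + ∑ i, p i ^ 2) (2 * u) u := by
      simpa using (hasDerivAt_pow 2 u).add_const (∑ i, p i ^ 2)
    have h2 := h1.sqrt (ne_of_gt harg)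
    have h4 : 2 * u / (2 * Real.sqrt (u ^ 2 + ∑ i, p i ^ 2)) = u / w u := by
      rw [← hWeq, mul_div_mul_left _ _ (two_ne_zero)]
    rw [← h4, hw]
    exact h2
  -- derivative of γ entries
  have hdγ : ∀ i j, HasDerivAt (fun t => γ t i j) (p i * p j / (w u) ^ 3) u := by
    intro i j
    have hg : HasDerivAt (fun t => w t * (t + w t))
        (u / w u * (u + w u) + w u * (1 + u / w u)) u :=
      hdw.mul ((hasDerivAt_id u).add hdw)
    have hne : w u * (u + w u) ≠ 0 := mul_ne_zero hWne huWne
    have h := ((hasDerivAt_const u (p i * p j)).div hg hne).const_sub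
      (if i = j then (1:ℝ) else 0)
    rw [hγ]
    refine h.congr_deriv (Eq.symm ?_)
    field_simp
    ring
  -- symmetry of γ
  have hγsymm : ∀ i j, γ u i j = γ u j i := by
    intro i j; rw [hγ]; simp only
    rw [mul_comm (p i)]
    congr 1
    simp [eq_comm]
  -- γ applied to p
  have hgp : ∀ j, (∑ k, γ u j k * p k) = (u / w u) * p j := by
    intro j
    rw [hγ]
    simp only [sub_mul, Finset.sum_sub_distrib, ite_mul, one_mul, zero_mul,
      Finset.sum_ite_eq, Finset.mem_univ, if_true]
    have : ∀ k ∈ Finset.univ, p j * p k / (w u * (u + w u)) * p k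
        = (p j / (w u * (u + w u))) * p k ^ 2 := by intro k _; ring
    rw [Finset.sum_congr rfl this, ← Finset.mul_sum, hp2]
    field_simp
    ring
  have hpg : ∀ j, (∑ k, p k * γ u k j) = (u / w u) * p j := by
    intro j
    have : ∀ k ∈ Finset.univ, p k * γ u k j = γ u j k * p k := by
      intro k _; rw [hγsymm k j]; ring
    rw [Finset.sum_congr rfl this, hgp]
  -- γ * γ
  have hL3 : ∀ i j, (∑ k, γ u i k * γ u k j)
      = (if i = j then (1:ℝ) else 0) - p i * p j / (w u) ^ 2 := by
    intro i j
    rw [hγ]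
    simp only
    have expand : ∀ k ∈ Finset.univ,
        ((if i = k then (1:ℝ) else 0) - p i * p k / (w u * (u + w u)))
          * ((if k = j then (1:ℝ) else 0) - p k * p j / (w u * (u + w u)))
        = ((if i = k then (1:ℝ) else 0) * (if k = j then (1:ℝ) else 0)
            - (if i = k then (1:ℝ) else 0) * (p k * p j / (w u * (u + w u)))
            - (p i * p k / (w u * (u + w u))) * (if k = j then (1:ℝ) else 0))
            + (p i * p j / (w u * (u + w u)) ^ 2) * p k ^ 2 := by
      intro k _
      split_ifs <;> field_simp <;> ring
    rw [Finset.sum_congr rfl expand]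
    rw [Finset.sum_add_distrib, Finset.sum_sub_distrib, Finset.sum_sub_distrib,
      ← Finset.mul_sum, hp2]
    simp only [ite_mul, mul_ite, one_mul, mul_one, zero_mul, mul_zero,
      Finset.sum_ite_eq, Finset.sum_ite_eq', Finset.mem_univ, if_true]
    rcases eq_or_ne i j with h1 | h1 <;> simp [h1] <;> field_simp <;> ring
  -- sum-swap helper
  have swap3 : ∀ (f : Fin n → Fin n → Fin n → ℝ),
      (∑ k, ∑ m, ∑ l, f k m l) = ∑ m, ∑ l, ∑ k, f k m l := by
    intro f
    rw [Finset.sum_comm]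
    exact Finset.sum_congr rfl fun m _ => Finset.sum_comm
  -- p B γ = (W²/u²) p a
  have hL2 : ∀ j, (∑ k, ∑ l, p k * (u * (if k = l then (1:ℝ) else 0) + S k l) * γ u l j)
      = ((w u) ^ 2 / u ^ 2) * ∑ k, p k * amat u k j := by
    intro j
    have step : (∑ k, p k * amat u k j)
        = (u / w u) ^ 2 * ∑ k, ∑ l, p k * (u * (if k = l then (1:ℝ) else 0) + S k l) * γ u l j := by
      calc ∑ k, p k * amat u k j
          = ∑ k, ∑ m, ∑ l, (p k * γ u k m)
              * ((u / w u) * ((u * (if m = l then (1:ℝ) else 0) + S m l) * γ u l j)) := by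
            rw [ham]
            simp only [Finset.mul_sum]
            exact Finset.sum_congr rfl fun k _ => Finset.sum_congr rfl fun m _ =>
              Finset.sum_congr rfl fun l _ => by ring
        _ = ∑ m, ∑ l, ∑ k, (p k * γ u k m)
              * ((u / w u) * ((u * (if m = l then (1:ℝ) else 0) + S m l) * γ u l j)) := swap3 _
        _ = ∑ m, ∑ l, (∑ k, p k * γ u k m)
              * ((u / w u) * ((u * (if m = l then (1:ℝ) else 0) + S m l) * γ u l j)) :=
            Finset.sum_congr rfl fun m _ => Finset.sum_congr rfl fun l _ =>
              (Finset.sum_mul _ _ _).symm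
        _ = ∑ m, ∑ l, ((u / w u) * p m)
              * ((u / w u) * ((u * (if m = l then (1:ℝ) else 0) + S m l) * γ u l j)) := by
            refine Finset.sum_congr rfl fun m _ => Finset.sum_congr rfl fun l _ => ?_
            rw [hpg m]
        _ = (u / w u) ^ 2 * ∑ k, ∑ l, p k * (u * (if k = l then (1:ℝ) else 0) + S k l) * γ u l j := by
            rw [Finset.mul_sum]
            refine Finset.sum_congr rfl fun m _ => ?_
            rw [Finset.mul_sum]
            exact Finset.sum_congr rfl fun l _ => by ring
    rw [step, ← mul_assoc]
    have h1 : ((w u) ^ 2 / u ^ 2) * (u / w u) ^ 2 = 1 := by field_simp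
    rw [h1, one_mul]
  have hL2' : ∀ i, (∑ k, ∑ l, γ u i k * (u * (if k = l then (1:ℝ) else 0) + S k l) * p l)
      = ((w u) ^ 2 / u ^ 2) * ∑ k, amat u i k * p k := by
    intro i
    have step : (∑ k, amat u i k * p k)
        = (u / w u) ^ 2 * ∑ k, ∑ l, γ u i k * (u * (if k = l then (1:ℝ) else 0) + S k l) * p l := by
      calc ∑ k, amat u i k * p k
          = ∑ k, ∑ m, ∑ l, (γ u l k * p k)
              * ((u / w u) * (γ u i m * (u * (if m = l then (1:ℝ) else 0) + S m l))) := by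
            rw [ham]
            simp only [Finset.sum_mul, Finset.mul_sum]
            exact Finset.sum_congr rfl fun k _ => Finset.sum_congr rfl fun m _ =>
              Finset.sum_congr rfl fun l _ => by ring
        _ = ∑ m, ∑ l, ∑ k, (γ u l k * p k)
              * ((u / w u) * (γ u i m * (u * (if m = l then (1:ℝ) else 0) + S m l))) := swap3 _
        _ = ∑ m, ∑ l, (∑ k, γ u l k * p k)
              * ((u / w u) * (γ u i m * (u * (if m = l then (1:ℝ) else 0) + S m l))) :=
            Finset.sum_congr rfl fun m _ => Finset.sum_congr rfl fun l _ =>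
              (Finset.sum_mul _ _ _).symm
        _ = ∑ m, ∑ l, ((u / w u) * p l)
              * ((u / w u) * (γ u i m * (u * (if m = l then (1:ℝ) else 0) + S m l))) := by
            refine Finset.sum_congr rfl fun m _ => Finset.sum_congr rfl fun l _ => ?_
            rw [hgp l]
        _ = (u / w u) ^ 2 * ∑ k, ∑ l, γ u i k * (u * (if k = l then (1:ℝ) else 0) + S k l) * p l := by
            rw [Finset.mul_sum]
            refine Finset.sum_congr rfl fun m _ => ?_
            rw [Finset.mul_sum]
            exact Finset.sum_congr rfl fun l _ => by ring
    rw [step, ← mul_assoc]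
    have h1 : ((w u) ^ 2 / u ^ 2) * (u / w u) ^ 2 = 1 := by field_simp
    rw [h1, one_mul]
  -- inner double sum in terms of a
  have hT : ∀ i j, (∑ k, ∑ l, γ u i k * (u * (if k = l then (1:ℝ) else 0) + S k l) * γ u l j)
      = (w u / u) * amat u i j := by
    intro i j
    have h1 : (w u / u) * (u / w u) = 1 := by field_simp
    rw [ham]
    simp only
    rw [← mul_assoc, h1, one_mul]
  -- derivative of amat entries, in nice form
  have hda : ∀ i j, HasDerivAt (fun t => amat t i j)
      ((1 / u - u / (w u) ^ 2) * amat u i j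
        + (p i * (∑ k, p k * amat u k j) + (∑ k, amat u i k * p k) * p j) / (u * (w u) ^ 2)
        + (u / w u) * ((if i = j then (1:ℝ) else 0) - p i * p j / (w u) ^ 2)) u := by
    intro i j
    have hdq : HasDerivAt (fun t => t / w t) ((1 * w u - u * (u / w u)) / (w u) ^ 2) u :=
      (hasDerivAt_id u).div hdw hWne
    have hdin : HasDerivAt
        (fun t => ∑ k, ∑ l, γ t i k * (t * (if k = l then (1:ℝ) else 0) + S k l) * γ t l j)
        (∑ k, ∑ l,
          ((p i * p k / (w u) ^ 3 * (u * (if k = l then (1:ℝ) else 0) + S k l)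
              + γ u i k * (if k = l then (1:ℝ) else 0)) * γ u l j
            + γ u i k * (u * (if k = l then (1:ℝ) else 0) + S k l)
                * (p l * p j / (w u) ^ 3))) u := by
      refine HasDerivAt.fun_sum fun k _ => HasDerivAt.fun_sum fun l _ => ?_
      have h2 : HasDerivAt (fun t : ℝ => t * (if k = l then (1:ℝ) else 0) + S k l)
          (if k = l then (1:ℝ) else 0) u := by
        simpa using ((hasDerivAt_id u).mul_const (if k = l then (1:ℝ) else 0)).add_const (S k l)
      exact ((hdγ i k).mul h2).mul (hdγ l j)
    have hm := hdq.mul hdin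
    have e1 : (∑ k, ∑ l,
          ((p i * p k / (w u) ^ 3 * (u * (if k = l then (1:ℝ) else 0) + S k l)
              + γ u i k * (if k = l then (1:ℝ) else 0)) * γ u l j
            + γ u i k * (u * (if k = l then (1:ℝ) else 0) + S k l)
                * (p l * p j / (w u) ^ 3)))
        = (∑ k, ∑ l, (p i / (w u) ^ 3)
              * (p k * (u * (if k = l then (1:ℝ) else 0) + S k l) * γ u l j))
          + (∑ k, ∑ l, (γ u i k * (if k = l then (1:ℝ) else 0)) * γ u l j)
          + (∑ k, ∑ l, (p j / (w u) ^ 3)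
              * (γ u i k * (u * (if k = l then (1:ℝ) else 0) + S k l) * p l)) := by
      rw [← Finset.sum_add_distrib, ← Finset.sum_add_distrib]
      refine Finset.sum_congr rfl fun k _ => ?_
      rw [← Finset.sum_add_distrib, ← Finset.sum_add_distrib]
      exact Finset.sum_congr rfl fun l _ => by ring
    have e2 : (∑ k, ∑ l, (p i / (w u) ^ 3)
          * (p k * (u * (if k = l then (1:ℝ) else 0) + S k l) * γ u l j))
        = (p i / (w u) ^ 3) * (((w u) ^ 2 / u ^ 2) * ∑ k, p k * amat u k j) := by
      rw [← hL2 j, Finset.mul_sum]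
      exact Finset.sum_congr rfl fun k _ => by rw [Finset.mul_sum]
    have e3 : (∑ k, ∑ l, (γ u i k * (if k = l then (1:ℝ) else 0)) * γ u l j)
        = (if i = j then (1:ℝ) else 0) - p i * p j / (w u) ^ 2 := by
      rw [← hL3 i j]
      refine Finset.sum_congr rfl fun k _ => ?_
      simp [mul_ite, ite_mul, Finset.sum_ite_eq, Finset.mem_univ]
    have e4 : (∑ k, ∑ l, (p j / (w u) ^ 3)
          * (γ u i k * (u * (if k = l then (1:ℝ) else 0) + S k l) * p l))
        = (p j / (w u) ^ 3) * (((w u) ^ 2 / u ^ 2) * ∑ k, amat u i k * p k) := by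
      rw [← hL2' i, Finset.mul_sum]
      exact Finset.sum_congr rfl fun k _ => by rw [Finset.mul_sum]
    rw [e1, e2, e3, e4] at hm
    have hfun : (fun t => amat t i j)
        = fun t => (t / w t) * ∑ k, ∑ l,
            γ t i k * (t * (if k = l then (1:ℝ) else 0) + S k l) * γ t l j := by
      funext t; rw [ham]
    rw [hfun]
    refine hm.congr_deriv (Eq.symm ?_)
    rw [hT i j]
    generalize amat u i j = A
    generalize (∑ k : Fin n, p k * amat u k j) = Q
    generalize (∑ k : Fin n, amat u i k * p k) = R
    generalize (if i = j then (1:ℝ) else 0) = d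
    field_simp
    ring
  have hdA : HasDerivAt amat (fun i j =>
      (1 / u - u / (w u) ^ 2) * amat u i j
        + (p i * (∑ k, p k * amat u k j) + (∑ k, amat u i k * p k) * p j) / (u * (w u) ^ 2)
        + (u / w u) * ((if i = j then (1:ℝ) else 0) - p i * p j / (w u) ^ 2)) u :=
    hasDerivAt_pi.2 fun i => hasDerivAt_pi.2 fun j => hda i j
  have hcomp := hLF.comp_hasDerivAt u hdA
  refine hcomp.congr_deriv (Eq.symm ?_)
  -- now: target value = LF (nice matrix)
  have hrep : ∀ v : Fin n → Fin n → ℝ, LF v = ∑ i, ∑ j, Fm i j * v i j := by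
    intro v
    have hv : v = ∑ i : Fin n, ∑ j : Fin n,
        v i j • (Pi.single i (Pi.single j (1:ℝ) : Fin n → ℝ) : Fin n → Fin n → ℝ) := by
      funext a b
      simp [Finset.sum_apply, Pi.single_apply,
        apply_ite (fun f : Fin n → ℝ => f b)]
    conv_lhs => rw [hv]
    rw [map_sum]
    refine Finset.sum_congr rfl fun i _ => ?_
    rw [map_sum]
    refine Finset.sum_congr rfl fun j _ => ?_
    rw [map_smul, hFm]
    simp [mul_comm]
  rw [hrep]
  have hasymm : ∀ i j, amat u i j = amat u j i := by
    intro i j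
    rw [ham]
    simp only
    congr 1
    rw [Finset.sum_comm]
    refine Finset.sum_congr rfl fun l _ => Finset.sum_congr rfl fun k _ => ?_
    have hB : (u * (if l = k then (1:ℝ) else 0) + S l k)
        = (u * (if k = l then (1:ℝ) else 0) + S k l) := by
      rw [hS l k]
      congr 2
      simp [eq_comm]
    rw [hγsymm i k, hγsymm l j, hB]
    ring
  have hcomm' : ∀ q r, (∑ j, Fm q j * amat u j r) = ∑ j, amat u q j * Fm j r := by
    intro q r
    have h := congrFun (congrFun hcomm q) r
    simpa [Matrix.mul_apply] using h
  have hkey : (∑ i, ∑ j, Fm i j * (p i * ∑ k, p k * amat u k j))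
      = ∑ i, ∑ j, Fm i j * ((∑ k, amat u i k * p k) * p j) := by
    have hL : (∑ i, ∑ j, Fm i j * (p i * ∑ k, p k * amat u k j))
        = ∑ k, ∑ i, (p i * p k) * (∑ j, Fm i j * amat u j k) := by
      calc (∑ i, ∑ j, Fm i j * (p i * ∑ k, p k * amat u k j))
          = ∑ i, ∑ j, ∑ k, (p i * p k) * (Fm i j * amat u k j) := by
            refine Finset.sum_congr rfl fun i _ => Finset.sum_congr rfl fun j _ => ?_
            rw [Finset.mul_sum, Finset.mul_sum]
            exact Finset.sum_congr rfl fun k _ => by ring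
        _ = ∑ i, ∑ k, ∑ j, (p i * p k) * (Fm i j * amat u k j) :=
            Finset.sum_congr rfl fun i _ => Finset.sum_comm
        _ = ∑ i, ∑ k, (p i * p k) * (∑ j, Fm i j * amat u j k) := by
            refine Finset.sum_congr rfl fun i _ => Finset.sum_congr rfl fun k _ => ?_
            rw [Finset.mul_sum]
            exact Finset.sum_congr rfl fun j _ => by rw [hasymm k j]
        _ = ∑ k, ∑ i, (p i * p k) * (∑ j, Fm i j * amat u j k) := Finset.sum_comm
    have hR : (∑ i, ∑ j, Fm i j * ((∑ k, amat u i k * p k) * p j))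
        = ∑ j, ∑ k, (p j * p k) * (∑ i, Fm k i * amat u i j) := by
      calc (∑ i, ∑ j, Fm i j * ((∑ k, amat u i k * p k) * p j))
          = ∑ i, ∑ j, ∑ k, (p j * p k) * (Fm i j * amat u i k) := by
            refine Finset.sum_congr rfl fun i _ => Finset.sum_congr rfl fun j _ => ?_
            rw [Finset.sum_mul, Finset.mul_sum]
            exact Finset.sum_congr rfl fun k _ => by ring
        _ = ∑ j, ∑ k, ∑ i, (p j * p k) * (Fm i j * amat u i k) := swap3 _
        _ = ∑ j, ∑ k, (p j * p k) * (∑ i, amat u k i * Fm i j) := by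
            refine Finset.sum_congr rfl fun j _ => Finset.sum_congr rfl fun k _ => ?_
            rw [Finset.mul_sum]
            refine Finset.sum_congr rfl fun i _ => ?_
            rw [hasymm i k]
            ring
        _ = ∑ j, ∑ k, (p j * p k) * (∑ i, Fm k i * amat u i j) := by
            refine Finset.sum_congr rfl fun j _ => Finset.sum_congr rfl fun k _ => ?_
            rw [← hcomm' k j]
    rw [hL, hR]
    exact Finset.sum_congr rfl fun x _ => Finset.sum_congr rfl fun y _ => by ring
  symm
  calc (∑ i, ∑ j, Fm i j * ((1 / u - u / (w u) ^ 2) * amat u i j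
        + (p i * (∑ k, p k * amat u k j) + (∑ k, amat u i k * p k) * p j) / (u * (w u) ^ 2)
        + (u / w u) * ((if i = j then (1:ℝ) else 0) - p i * p j / (w u) ^ 2)))
      = ∑ i, ∑ j, ((1 / u - u / (w u) ^ 2) * (Fm i j * amat u i j)
        + (Fm i j * (p i * ∑ k, p k * amat u k j)
            + Fm i j * ((∑ k, amat u i k * p k) * p j)) / (u * (w u) ^ 2)
        + (u / w u) * (Fm i j * ((if i = j then (1:ℝ) else 0) - p i * p j / (w u) ^ 2))) :=
        Finset.sum_congr rfl fun i _ => Finset.sum_congr rfl fun j _ => by ring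
    _ = (1 / u - u / (w u) ^ 2) * (∑ i, ∑ j, Fm i j * amat u i j)
        + ((∑ i, ∑ j, Fm i j * (p i * ∑ k, p k * amat u k j))
            + (∑ i, ∑ j, Fm i j * ((∑ k, amat u i k * p k) * p j))) / (u * (w u) ^ 2)
        + (u / w u) * ∑ i, ∑ j, Fm i j
            * ((if i = j then (1:ℝ) else 0) - p i * p j / (w u) ^ 2) := by
        simp only [Finset.sum_add_distrib, ← Finset.mul_sum, ← Finset.sum_div,
          Finset.sum_sub_distrib]
    _ = (1 / u - u / (w u) ^ 2) * (∑ i, ∑ j, Fm i j * amat u i j)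
        + 2 * (∑ i, ∑ j, ∑ k, Fm i j * amat u i k * p j * p k) / (u * (w u) ^ 2)
        + (u / w u) * ∑ i, ∑ j, Fm i j
            * ((if i = j then (1:ℝ) else 0) - p i * p j / (w u) ^ 2) := by
        rw [hkey]
        have e5 : (∑ i, ∑ j, Fm i j * ((∑ k, amat u i k * p k) * p j))
            = ∑ i, ∑ j, ∑ k, Fm i j * amat u i k * p j * p k := by
          refine Finset.sum_congr rfl fun i _ => Finset.sum_congr rfl fun j _ => ?_
          rw [Finset.sum_mul, Finset.mul_sum]
          exact Finset.sum_congr rfl fun k _ => by ring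
        rw [e5]
        ring
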